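/- Let β ∈ ℂ with β ∉ {0, 1, −1, i, −i}. Then there exist a unitary U in the one-qubit Clifford group, a complex number α with |α| > 1, and a nonzero scalar c ∈ ℂ such that U(e₀ + β·e₁) = c·(e₀ + α·e₁). -/

import Mathlib

open scoped BigOperators

noncomputable section

namespace StabPaper

/-- The Hadamard matrix `H = (1/√2)·[[1,1],[1,−1]]`. -/
def Hmat : Matrix (Fin 2) (Fin 2) ℂ :=
  ((Real.sqrt 2 : ℝ) : ℂ)⁻¹ • !![1, 1; 1, -1]

/-- The phase matrix `S = diag(1, i)`. -/
def Smat : Matrix (Fin 2) (Fin 2) ℂ := !![1, 0; 0, Complex.I]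

lemma sqrt2_ne : ((Real.sqrt 2 : ℝ) : ℂ) ≠ 0 := by
  simp [Real.sqrt_ne_zero'.mpr (by norm_num : (0:ℝ) < 2)]

lemma sqrt2_sq : ((Real.sqrt 2 : ℝ) : ℂ) * ((Real.sqrt 2 : ℝ) : ℂ) = 2 := by
  norm_cast
  exact Real.mul_self_sqrt (by norm_num)

lemma sqrt2_pow : ((Real.sqrt 2 : ℝ) : ℂ) ^ 2 = 2 := by rw [sq, sqrt2_sq]

lemma H_mem : Hmat ∈ Submonoid.closure {Hmat, Smat} :=
  Submonoid.subset_closure (by simp)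

lemma S_mem : Smat ∈ Submonoid.closure {Hmat, Smat} :=
  Submonoid.subset_closure (by simp)

lemma H_unitary : Hmat ∈ Matrix.unitaryGroup (Fin 2) ℂ := by
  constructor <;>
  · ext i j
    fin_cases i <;> fin_cases j <;>
      simp [Hmat, Matrix.mul_apply, Fin.sum_univ_two, Matrix.star_apply, mul_comm,
        mul_assoc, ← mul_inv, sqrt2_sq] <;> ring_nf <;>
      simp [← mul_inv, sqrt2_sq, sqrt2_pow] <;> norm_num

lemma S_unitary : Smat ∈ Matrix.unitaryGroup (Fin 2) ℂ := by
  constructor <;>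
  · ext i j
    fin_cases i <;> fin_cases j <;>
      simp [Smat, Matrix.mul_apply, Fin.sum_univ_two, Matrix.star_apply, Complex.ext_iff]

lemma HSSH : Hmat * Smat * Smat * Hmat = !![0, 1; 1, 0] := by
  ext i j
  fin_cases i <;> fin_cases j <;>
    simp [Hmat, Smat, Matrix.mul_apply, Fin.sum_univ_two, Complex.I_mul_I] <;> ring_nf <;>
    simp [← mul_inv, sqrt2_sq, sqrt2_pow, Complex.I_sq] <;> ring_nf <;>
    simp [← mul_inv, sqrt2_sq, sqrt2_pow]

lemma HSS : Hmat * Smat * Smat = ((Real.sqrt 2 : ℝ) : ℂ)⁻¹ • !![1, -1; 1, 1] := by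
  ext i j
  fin_cases i <;> fin_cases j <;>
    simp [Hmat, Smat, Matrix.mul_apply, Fin.sum_univ_two, Complex.I_mul_I] <;> ring_nf <;>
    simp [Complex.I_sq] <;> ring_nf

/-- Let `β ∈ ℂ` with `β ∉ {0, 1, −1, i, −i}`. Then there exist a unitary `U` in the
one-qubit Clifford group (the group generated by `H` and `S`; since this group is finite,
it coincides with the multiplicative closure of `{H, S}` used here), a complex number `α`
with `|α| > 1`, and a nonzero scalar `c` such that `U(e₀ + β·e₁) = c·(e₀ + α·e₁)`. -/
theorem clifford_normal_form (β : ℂ) (h0 : β ≠ 0) (h1 : β ≠ 1) (h2 : β ≠ -1)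
    (h3 : β ≠ Complex.I) (h4 : β ≠ -Complex.I) :
    ∃ U : Matrix (Fin 2) (Fin 2) ℂ, U ∈ Submonoid.closure {Hmat, Smat} ∧
      U ∈ Matrix.unitaryGroup (Fin 2) ℂ ∧
      ∃ (α c : ℂ), 1 < ‖α‖ ∧ c ≠ 0 ∧
        U.mulVec ![1, β] = c • ![1, α] := by
  rcases lt_trichotomy ‖β‖ 1 with hb | hb | hb
  · -- |β| < 1 : use X = H S S H, α = β⁻¹
    refine ⟨Hmat * Smat * Smat * Hmat,
      mul_mem (mul_mem (mul_mem H_mem S_mem) S_mem) H_mem,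
      mul_mem (mul_mem (mul_mem H_unitary S_unitary) S_unitary) H_unitary,
      β⁻¹, β, ?_, h0, ?_⟩
    · rw [norm_inv]
      exact (one_lt_inv₀ (norm_pos_iff.mpr h0)).mpr hb
    · rw [HSSH]
      ext i
      fin_cases i <;>
        simp [Matrix.mulVec, dotProduct, Fin.sum_univ_two, mul_inv_cancel₀ h0]
  · -- |β| = 1
    have hp : (1 : ℂ) + β ≠ 0 := fun h => h2 (by linear_combination h)
    have hm : (1 : ℂ) - β ≠ 0 := fun h => h1 (by linear_combination -h)
    set α₀ : ℂ := (1 - β) / (1 + β) with hα₀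
    have hα₀ne : α₀ ≠ 0 := div_ne_zero hm hp
    have habs : ‖α₀‖ ≠ 1 := by
      intro hc
      rw [hα₀, norm_div, div_eq_one_iff_eq (norm_ne_zero_iff.mpr hp)] at hc
      have h1' : Complex.normSq (1 - β) = Complex.normSq (1 + β) := by
        rw [← Complex.sq_norm, ← Complex.sq_norm, hc]
      have hre : β.re = 0 := by
        simp [Complex.normSq_apply, Complex.sub_re, Complex.sub_im, Complex.add_re,
          Complex.add_im] at h1'
        nlinarith [h1']
      have hns : Complex.normSq β = 1 := by
        rw [← Complex.sq_norm, hb]; norm_num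
      have hns' : β.re * β.re + β.im * β.im = 1 := by
        simpa [Complex.normSq_apply] using hns
      have him : (β.im - 1) * (β.im + 1) = 0 := by nlinarith
      rcases mul_eq_zero.mp him with h | h
      · exact h3 (by simp [Complex.ext_iff, hre]; linarith)
      · exact h4 (by simp [Complex.ext_iff, hre]; linarith)
    rcases lt_or_gt_of_ne habs with hlt | hgt
    · -- |α₀| < 1 : use H S S, α = α₀⁻¹
      refine ⟨Hmat * Smat * Smat,
        mul_mem (mul_mem H_mem S_mem) S_mem,
        mul_mem (mul_mem H_unitary S_unitary) S_unitary,
        α₀⁻¹, ((Real.sqrt 2 : ℝ) : ℂ)⁻¹ * (1 - β), ?_, mul_ne_zero (inv_ne_zero sqrt2_ne) hm, ?_⟩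
      · rw [norm_inv]
        exact (one_lt_inv₀ (norm_pos_iff.mpr hα₀ne)).mpr hlt
      · rw [HSS]
        ext i
        fin_cases i <;>
          simp [Matrix.mulVec, dotProduct, Fin.sum_univ_two, hα₀] <;>
          field_simp <;> ring
    · -- |α₀| > 1 : use H
      refine ⟨Hmat, H_mem, H_unitary, α₀,
        ((Real.sqrt 2 : ℝ) : ℂ)⁻¹ * (1 + β), hgt, mul_ne_zero (inv_ne_zero sqrt2_ne) hp, ?_⟩
      ext i
      fin_cases i <;>
        simp [Hmat, Matrix.mulVec, dotProduct, Fin.sum_univ_two, hα₀] <;>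
        field_simp <;> ring
  · -- |β| > 1 : use U = 1
    refine ⟨1, one_mem _, one_mem _, β, 1, hb, one_ne_zero, ?_⟩
    simp [Matrix.one_mulVec]

end StabPaper
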